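/- (Combined residual bound, Lemma 3.5.) Let (x^{k+1}, ỹ^{k+1}, y^{k+1}) be produced by one SPIDA iteration from (x^k, y^k), where ∇ψ and ∇φ are Lipschitz continuous with moduli L_ψ and L_φ respectively. Then there exist ξ^{k+1} ∈ ∂f(x^{k+1}) and ζ^{k+1} ∈ ∂g(y^{k+1}) such that ‖x^{k+1} − Π_X[x^{k+1} − (ξ^{k+1} + Aᵀy^{k+1})]‖² + ‖y^{k+1} − Π_Y[y^{k+1} − (ζ^{k+1} − Ax^{k+1})]‖² ≤ 2(‖AAᵀ‖ + γ² L_φ²) ‖ỹ^{k+1} − y^{k+1}‖² + 2μ² L_ψ² ‖x^{k+1} − x^k‖² + 2γ² L_φ² ‖ỹ^{k+1} − y^k‖², where Π_X, Π_Y are Euclidean projections and ‖AAᵀ‖ is the spectral norm of AAᵀ. -/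

import Mathlib

set_option maxHeartbeats 2000000


noncomputable section
open scoped RealInnerProductSpace
open Filter

abbrev Euc (d : ℕ) : Type := EuclideanSpace ℝ (Fin d)

/-- Bregman distance associated with kernel `φ` whose gradient map is `φ'`. -/
def Breg {d : ℕ} (φ : Euc d → ℝ) (φ' : Euc d → Euc d) (x y : Euc d) : ℝ :=
  φ x - φ y - ⟪φ' y, x - y⟫

/-- Convex subdifferential. -/
def subdiff {d : ℕ} (h : Euc d → ℝ) (x : Euc d) : Set (Euc d) :=
  {ξ | ∀ z, h x + ⟪z - x, ξ⟫ ≤ h z}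

open Classical in
/-- Euclidean (metric) projection onto a set (the nearest point, when it exists). -/
def projOn {d : ℕ} (X : Set (Euc d)) (z : Euc d) : Euc d :=
  if h : ∃ p ∈ X, ∀ w ∈ X, ‖z - p‖ ≤ ‖z - w‖ then h.choose else z


lemma projOn_spec {d : ℕ} {X : Set (Euc d)} (hne : X.Nonempty) (hcl : IsClosed X)
    (hcv : Convex ℝ X) (z : Euc d) :
    projOn X z ∈ X ∧ ∀ w ∈ X, ⟪z - projOn X z, w - projOn X z⟫ ≤ 0 := by
  have hcomp : IsComplete X := hcl.isComplete
  obtain ⟨v, hv, hveq⟩ := exists_norm_eq_iInf_of_complete_convex hne hcomp hcv z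
  have : Nonempty X := hne.to_subtype
  have hex : ∃ p ∈ X, ∀ w ∈ X, ‖z - p‖ ≤ ‖z - w‖ := by
    refine ⟨v, hv, fun w hw => ?_⟩
    have h2 : (⨅ w : X, ‖z - (w : Euc d)‖) ≤ ‖z - w‖ :=
      ciInf_le (f := fun w : X => ‖z - (w : Euc d)‖)
        ⟨0, Set.forall_mem_range.2 fun _ => norm_nonneg _⟩ ⟨w, hw⟩
    linarith [hveq ▸ h2]
  rw [projOn, dif_pos hex]
  obtain ⟨hp, hmin⟩ := hex.choose_spec
  refine ⟨hp, ?_⟩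
  have heq : ‖z - hex.choose‖ = ⨅ w : X, ‖z - (w : Euc d)‖ := by
    apply le_antisymm
    · exact le_ciInf (f := fun w : X => ‖z - (w : Euc d)‖) fun w => hmin w w.2
    · exact ciInf_le (f := fun w : X => ‖z - (w : Euc d)‖)
        ⟨0, Set.forall_mem_range.2 fun _ => norm_nonneg _⟩ ⟨_, hp⟩
  exact (norm_eq_iInf_iff_real_inner_le_zero hcv hp).mp heq

lemma projOn_fixed {d : ℕ} {X : Set (Euc d)} (hne : X.Nonempty) (hcl : IsClosed X)
    (hcv : Convex ℝ X) {x1 : Euc d} (hx1 : x1 ∈ X) (v : Euc d)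
    (hv : ∀ z ∈ X, 0 ≤ ⟪v, z - x1⟫) : projOn X (x1 - v) = x1 := by
  obtain ⟨hpmem, hpvi⟩ := projOn_spec hne hcl hcv (x1 - v)
  set p := projOn X (x1 - v) with hp
  have h1 : ⟪x1 - v - p, x1 - p⟫ ≤ 0 := hpvi x1 hx1
  have h2 : 0 ≤ ⟪v, p - x1⟫ := hv p hpmem
  have h3 : ⟪x1 - p, x1 - p⟫ ≤ 0 := by
    have e : x1 - p = (x1 - v - p) + v := by abel
    have h4 : ⟪v, x1 - p⟫ ≤ 0 := by
      rw [show x1 - p = -(p - x1) by abel, inner_neg_right]; linarith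
    calc ⟪x1 - p, x1 - p⟫ = ⟪x1 - v - p, x1 - p⟫ + ⟪v, x1 - p⟫ := by
          rw [e, inner_add_left]
      _ ≤ 0 := by linarith
  have : x1 - p = 0 := by
    have := real_inner_self_nonneg (x := x1 - p)
    have h5 : ⟪x1 - p, x1 - p⟫ = 0 := le_antisymm h3 this
    exact inner_self_eq_zero.mp h5
  exact (sub_eq_zero.mp this).symm

lemma projOn_nonexp {d : ℕ} {X : Set (Euc d)} (hne : X.Nonempty) (hcl : IsClosed X)
    (hcv : Convex ℝ X) (u w : Euc d) :
    ‖projOn X u - projOn X w‖ ≤ ‖u - w‖ := by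
  obtain ⟨hpmem, hpvi⟩ := projOn_spec hne hcl hcv u
  obtain ⟨hqmem, hqvi⟩ := projOn_spec hne hcl hcv w
  set p := projOn X u
  set q := projOn X w
  have h1 : ⟪u - p, q - p⟫ ≤ 0 := hpvi q hqmem
  have h2 : ⟪w - q, p - q⟫ ≤ 0 := hqvi p hpmem
  have key : ‖p - q‖ ^ 2 ≤ ⟪u - w, p - q⟫ := by
    have e : ⟪u - w, p - q⟫ = ⟪u - p, p - q⟫ + ⟪p - q, p - q⟫ + ⟪q - w, p - q⟫ := by
      rw [← inner_add_left, ← inner_add_left]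
      congr 1
      abel
    have e1 : ⟪u - p, p - q⟫ = -⟪u - p, q - p⟫ := by
      rw [show p - q = -(q - p) by abel, inner_neg_right]
    have e2 : ⟪q - w, p - q⟫ = -⟪w - q, p - q⟫ := by
      rw [show q - w = -(w - q) by abel, inner_neg_left]
    rw [e, e1, e2, real_inner_self_eq_norm_sq]
    linarith
  have h3 : ⟪u - w, p - q⟫ ≤ ‖u - w‖ * ‖p - q‖ := real_inner_le_norm _ _
  rcases eq_or_lt_of_le (norm_nonneg (p - q)) with h0 | h0
  · rw [← h0]; exact norm_nonneg _
  · have : ‖p - q‖ * ‖p - q‖ ≤ ‖u - w‖ * ‖p - q‖ := by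
      calc ‖p - q‖ * ‖p - q‖ = ‖p - q‖ ^ 2 := by ring
        _ ≤ ⟪u - w, p - q⟫ := key
        _ ≤ ‖u - w‖ * ‖p - q‖ := h3
    exact le_of_mul_le_mul_right this h0

lemma first_order {d : ℕ} {X : Set (Euc d)} (hXcv : Convex ℝ X) {f g0 : Euc d → ℝ}
    (hf : ConvexOn ℝ Set.univ f) {x1 : Euc d} (hx1 : x1 ∈ X)
    {L : Euc d →L[ℝ] ℝ} {q : Euc d}
    (hg0 : HasFDerivAt g0 L x1) (hLq : ∀ v, L v = ⟪q, v⟫)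
    (hmin : ∀ x ∈ X, f x1 + g0 x1 ≤ f x + g0 x) :
    ∀ z ∈ X, f x1 ≤ f z + ⟪q, z - x1⟫ := by
  intro z hz
  set v := z - x1 with hv
  set F : ℝ → ℝ := fun t => g0 (x1 + t • v) with hF
  have hc : HasDerivAt (fun t : ℝ => x1 + t • v) v 0 := by
    simpa using ((hasDerivAt_id (0:ℝ)).smul_const v).const_add x1
  have hFd : HasDerivAt F (L v) 0 := by
    have hg0' : HasFDerivAt g0 L ((fun t : ℝ => x1 + t • v) 0) := by simpa using hg0
    exact hg0'.comp_hasDerivAt 0 hc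
  rw [hasDerivAt_iff_tendsto_slope] at hFd
  have hFd' : Tendsto (slope F 0) (nhdsWithin 0 (Set.Ioi 0)) (nhds (L v)) :=
    hFd.mono_left (nhdsWithin_mono 0 (fun t ht => ne_of_gt ht))
  have hev : ∀ᶠ t in nhdsWithin (0:ℝ) (Set.Ioi 0), f x1 - f z ≤ slope F 0 t := by
    filter_upwards [Ioc_mem_nhdsGT_of_mem (Set.left_mem_Ico.2 one_pos)] with t ht
    obtain ⟨ht0, ht1⟩ := ht
    have hmem : x1 + t • v ∈ X := by
      have : x1 + t • v = (1 - t) • x1 + t • z := by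
        rw [hv]; module
      rw [this]
      exact hXcv hx1 hz (by linarith) (by linarith) (by ring)
    have hcvf : f (x1 + t • v) ≤ (1 - t) * f x1 + t * f z := by
      have : x1 + t • v = (1 - t) • x1 + t • z := by rw [hv]; module
      rw [this]
      exact hf.2 (Set.mem_univ x1) (Set.mem_univ z) (by linarith) (by linarith) (by ring)
    have hm := hmin _ hmem
    have hnum : t * (f x1 - f z) ≤ F t - F 0 := by
      simp only [hF, zero_smul, add_zero]
      nlinarith
    have hsl : slope F 0 t = (F t - F 0) / t := by
      rw [slope_def_field, sub_zero]
    rw [hsl, le_div_iff₀ ht0]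
    nlinarith
  have := ge_of_tendsto hFd' hev
  have hq : L v = ⟪q, v⟫ := hLq v
  linarith [this]

lemma exists_subgrad {d : ℕ} {X : Set (Euc d)} (hXcv : Convex ℝ X) {f : Euc d → ℝ}
    (hf : ConvexOn ℝ Set.univ f) (hfc : Continuous f) {x1 : Euc d} (hx1 : x1 ∈ X) (q : Euc d)
    (h : ∀ z ∈ X, f x1 ≤ f z + ⟪q, z - x1⟫) :
    ∃ ξ ∈ subdiff f x1, ∀ z ∈ X, 0 ≤ ⟪ξ + q, z - x1⟫ := by
  set s : Set (Euc d × ℝ) := {p | f (x1 + p.1) - f x1 + ⟪q, p.1⟫ < p.2} with hs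
  set t : Set (Euc d × ℝ) := {p | x1 + p.1 ∈ X ∧ p.2 ≤ 0} with ht
  have hso : IsOpen s := by
    have hcont : Continuous (fun p : Euc d × ℝ => f (x1 + p.1) - f x1 + ⟪q, p.1⟫) := by
      apply Continuous.add
      · exact (hfc.comp (continuous_const.add continuous_fst)).sub continuous_const
      · exact continuous_const.inner continuous_fst
    exact isOpen_lt hcont continuous_snd
  have hcombo : ∀ (w w' : Euc d) (a b : ℝ), a + b = 1 →
      x1 + (a • w + b • w') = a • (x1 + w) + b • (x1 + w') := by
    intro w w' a b hab
    have h1 : a • x1 + b • x1 = x1 := by rw [← add_smul, hab, one_smul]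
    rw [smul_add, smul_add,
      show a • x1 + a • w + (b • x1 + b • w') = (a • x1 + b • x1) + (a • w + b • w') by abel, h1]
  have hscv : Convex ℝ s := by
    rintro p hp p' hp' a b ha hb hab
    rcases eq_or_lt_of_le ha with h0 | ha'
    · have hb1 : b = 1 := by linarith
      have he : a • p + b • p' = p' := by rw [← h0, hb1]; simp
      rw [he]; exact hp'
    rcases eq_or_lt_of_le hb with h0 | hb'
    · have ha1 : a = 1 := by linarith
      have he : a • p + b • p' = p := by rw [← h0, ha1]; simp
      rw [he]; exact hp
    simp only [hs, Set.mem_setOf_eq] at hp hp' ⊢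
    have h1 : (a • p + b • p').1 = a • p.1 + b • p'.1 := rfl
    have h2 : (a • p + b • p').2 = a * p.2 + b * p'.2 := rfl
    rw [h1, h2, hcombo p.1 p'.1 a b hab]
    have hfcvx := hf.2 (Set.mem_univ (x1 + p.1)) (Set.mem_univ (x1 + p'.1)) ha hb hab
    simp only [smul_eq_mul] at hfcvx
    have hinner : ⟪q, a • p.1 + b • p'.1⟫ = a * ⟪q, p.1⟫ + b * ⟪q, p'.1⟫ := by
      rw [inner_add_right, real_inner_smul_right, real_inner_smul_right]
    rw [hinner]
    have k1 := mul_lt_mul_of_pos_left hp ha'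
    have k2 := mul_lt_mul_of_pos_left hp' hb'
    have hb2 : b = 1 - a := by linarith
    subst hb2
    nlinarith [k1, k2, hfcvx]
  have htcv : Convex ℝ t := by
    rintro p hp p' hp' a b ha hb hab
    simp only [ht, Set.mem_setOf_eq] at hp hp' ⊢
    constructor
    · have h1 : (a • p + b • p').1 = a • p.1 + b • p'.1 := rfl
      rw [h1, hcombo p.1 p'.1 a b hab]
      exact hXcv hp.1 hp'.1 ha hb hab
    · have h2 : (a • p + b • p').2 = a * p.2 + b * p'.2 := rfl
      rw [h2]
      have k1 := mul_le_mul_of_nonneg_left hp.2 ha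
      have k2 := mul_le_mul_of_nonneg_left hp'.2 hb
      simp only [mul_zero] at k1 k2
      linarith
  have hdisj : Disjoint s t := by
    rw [Set.disjoint_left]
    rintro p hps ⟨hpX, hp0⟩
    have := h (x1 + p.1) hpX
    rw [add_sub_cancel_left] at this
    simp only [hs, Set.mem_setOf_eq] at hps
    linarith
  obtain ⟨L, c, hLs, hLt⟩ := geometric_hahn_banach_open hscv hso htcv hdisj
  set u : Euc d := (InnerProductSpace.toDual ℝ (Euc d)).symm
      (L.comp (ContinuousLinearMap.inl ℝ (Euc d) ℝ)) with hu
  have huz : ∀ z : Euc d, L (z, 0) = ⟪u, z⟫ := by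
    intro z
    have e1 : ⟪u, z⟫ = (L.comp (ContinuousLinearMap.inl ℝ (Euc d) ℝ)) z := by
      rw [hu]; exact InnerProductSpace.toDual_symm_apply
    rw [e1]; rfl
  set a : ℝ := L (0, 1) with ha
  have hLdec : ∀ (z : Euc d) (r : ℝ), L (z, r) = ⟪u, z⟫ + r * a := by
    intro z r
    have e : ((z, r) : Euc d × ℝ) = (z, 0) + r • ((0 : Euc d), (1 : ℝ)) := by
      simp [Prod.ext_iff]
    rw [e, map_add, map_smul, huz, smul_eq_mul, ha]
  have h00t : ((0 : Euc d), (0 : ℝ)) ∈ t := by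
    simp only [ht, Set.mem_setOf_eq]
    exact ⟨by simpa using hx1, le_refl 0⟩
  have hc0 : c ≤ 0 := by
    have := hLt _ h00t
    rw [show ((0 : Euc d), (0:ℝ)) = 0 from rfl, map_zero] at this
    exact this
  have h01s : ∀ ε : ℝ, 0 < ε → ((0 : Euc d), ε) ∈ s := by
    intro ε hε
    simp only [hs, Set.mem_setOf_eq]
    simpa using hε
  have haneg : a < 0 := by
    have h1 := hLs _ (h01s 1 one_pos)
    rw [hLdec] at h1
    simp only [inner_zero_right, zero_add, one_mul] at h1
    linarith
  have hane : a ≠ 0 := ne_of_lt haneg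
  have hcge : 0 ≤ c := by
    by_contra hcon
    push_neg at hcon
    have hε : 0 < c / (2 * a) := div_pos_iff.mpr (Or.inr ⟨by linarith, by linarith⟩)
    have h1 := hLs _ (h01s _ hε)
    rw [hLdec] at h1
    simp only [inner_zero_right, zero_add] at h1
    have h2 : c / (2 * a) * a = c / 2 := by
      rw [div_mul_eq_mul_div, mul_comm (2:ℝ) a, ← div_div, mul_div_assoc,
        div_self hane, mul_one]
    rw [h2] at h1
    linarith
  have hceq : c = 0 := le_antisymm hc0 hcge
  have hna : (0:ℝ) < -a := by linarith
  have key : ∀ w : Euc d, ⟪u, w⟫ + a * (f (x1 + w) - f x1 + ⟪q, w⟫) ≤ 0 := by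
    intro w
    set B := f (x1 + w) - f x1 + ⟪q, w⟫ with hB
    by_contra hcon
    push_neg at hcon
    set ε := (⟪u, w⟫ + a * B) / (-a) with hε
    have hεpos : 0 < ε := div_pos hcon hna
    have hmem : (w, B + ε) ∈ s := by
      simp only [hs, Set.mem_setOf_eq]
      rw [← hB]
      linarith
    have h1 := hLs _ hmem
    rw [hLdec, hceq] at h1
    have hεa : ε * a = -(⟪u, w⟫ + a * B) := by
      rw [hε, div_mul_eq_mul_div, mul_div_assoc, div_neg, div_self hane]
      ring
    nlinarith [h1, hεa]
  refine ⟨(-a)⁻¹ • u - q, ?_, ?_⟩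
  · intro z
    have k := key (z - x1)
    rw [add_sub_cancel] at k
    have e : ⟪z - x1, (-a)⁻¹ • u - q⟫ = (-a)⁻¹ * ⟪u, z - x1⟫ - ⟪q, z - x1⟫ := by
      rw [real_inner_comm, inner_sub_left, real_inner_smul_left]
    rw [e]
    have h8 : (-a)⁻¹ * ⟪u, z - x1⟫ ≤ f z - f x1 + ⟪q, z - x1⟫ := by
      rw [inv_mul_le_iff₀ hna]
      linarith [k]
    linarith
  · intro z hz
    have hzt : ((z - x1 : Euc d), (0:ℝ)) ∈ t := by
      simp only [ht, Set.mem_setOf_eq]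
      exact ⟨by rw [add_sub_cancel]; exact hz, le_refl 0⟩
    have h1 := hLt _ hzt
    rw [hLdec, hceq] at h1
    simp only [zero_mul, add_zero] at h1
    have e : ⟪(-a)⁻¹ • u - q + q, z - x1⟫ = (-a)⁻¹ * ⟪u, z - x1⟫ := by
      rw [sub_add_cancel, real_inner_smul_left]
    rw [e]
    exact mul_nonneg (inv_nonneg.mpr hna.le) h1

lemma breg_fderiv {d : ℕ} (ψ : Euc d → ℝ) (ψ' : Euc d → Euc d)
    (hψg : ∀ z, HasGradientAt ψ (ψ' z) z) (xk x1 : Euc d) :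
    HasFDerivAt (fun x => Breg ψ ψ' x xk)
      (InnerProductSpace.toDual ℝ (Euc d) (ψ' x1) - innerSL ℝ (ψ' xk)) x1 := by
  have hψ1 : HasFDerivAt ψ (InnerProductSpace.toDual ℝ (Euc d) (ψ' x1)) x1 :=
    (hψg x1).hasFDerivAt
  have hlin : HasFDerivAt (fun x : Euc d => ⟪ψ' xk, x - xk⟫) (innerSL ℝ (ψ' xk)) x1 := by
    have h1 : (fun x : Euc d => ⟪ψ' xk, x - xk⟫)
        = fun x => (innerSL ℝ (ψ' xk)) x - ⟪ψ' xk, xk⟫ := by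
      funext x
      simp only [innerSL_apply_apply]
      exact inner_sub_right _ _ _
    rw [h1]
    simpa using (innerSL ℝ (ψ' xk)).hasFDerivAt.sub_const ⟪ψ' xk, xk⟫
  unfold Breg
  exact (hψ1.sub_const (ψ xk)).sub hlin

/-- Lemma 3.5: combined residual bound for one SPIDA iteration. -/
theorem spida_combined_residual_bound {n m : ℕ}
    (X : Set (Euc n)) (Y : Set (Euc m))
    (hXne : X.Nonempty) (hXcl : IsClosed X) (hXcv : Convex ℝ X)
    (hYne : Y.Nonempty) (hYcl : IsClosed Y) (hYcv : Convex ℝ Y)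
    (f : Euc n → ℝ) (g : Euc m → ℝ)
    (hf : ConvexOn ℝ Set.univ f) (hflsc : LowerSemicontinuous f)
    (hg : ConvexOn ℝ Set.univ g) (hglsc : LowerSemicontinuous g)
    (A : Euc n →L[ℝ] Euc m)
    (γ μ : ℝ) (hγ : 0 < γ) (hμ : 0 < μ)
    (φ : Euc m → ℝ) (φ' : Euc m → Euc m)
    (hφg : ∀ z, HasGradientAt φ (φ' z) z) (hφcv : ConvexOn ℝ Set.univ φ)
    (ψ : Euc n → ℝ) (ψ' : Euc n → Euc n)
    (hψg : ∀ z, HasGradientAt ψ (ψ' z) z) (hψcv : ConvexOn ℝ Set.univ ψ)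
    (xk x1 : Euc n) (yk yt1 y1 : Euc m)
    (hxk : xk ∈ X) (hyk : yk ∈ Y)
    (hyt1mem : yt1 ∈ Y)
    (hyt1max : ∀ y ∈ Y, -g y + ⟪A xk, y⟫ - γ * Breg φ φ' y yk ≤
      -g yt1 + ⟪A xk, yt1⟫ - γ * Breg φ φ' yt1 yk)
    (hx1mem : x1 ∈ X)
    (hx1min : ∀ x ∈ X, f x1 + ⟪A x1, yt1⟫ + μ * Breg ψ ψ' x1 xk ≤
      f x + ⟪A x, yt1⟫ + μ * Breg ψ ψ' x xk)
    (hy1mem : y1 ∈ Y)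
    (hy1max : ∀ y ∈ Y, -g y + ⟪A x1, y⟫ - γ * Breg φ φ' y yk ≤
      -g y1 + ⟪A x1, y1⟫ - γ * Breg φ φ' y1 yk)
    (Lψ Lφ : NNReal) (hψlip : LipschitzWith Lψ ψ') (hφlip : LipschitzWith Lφ φ') :
    ∃ ξ ∈ subdiff f x1, ∃ ζ ∈ subdiff g y1,
      ‖x1 - projOn X (x1 - (ξ + ContinuousLinearMap.adjoint A y1))‖ ^ 2
          + ‖y1 - projOn Y (y1 - (ζ - A x1))‖ ^ 2 ≤
        2 * (‖A.comp (ContinuousLinearMap.adjoint A)‖ + γ ^ 2 * (Lφ : ℝ) ^ 2)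
            * ‖yt1 - y1‖ ^ 2
          + 2 * μ ^ 2 * (Lψ : ℝ) ^ 2 * ‖x1 - xk‖ ^ 2
          + 2 * γ ^ 2 * (Lφ : ℝ) ^ 2 * ‖yt1 - yk‖ ^ 2 := by
  -- continuity of f and g
  have hfc : Continuous f := by
    rw [← continuousOn_univ]
    exact hf.continuousOn isOpen_univ
  have hgc : Continuous g := by
    rw [← continuousOn_univ]
    exact hg.continuousOn isOpen_univ
  -- x-side gradient data
  set qx : Euc n := ContinuousLinearMap.adjoint A yt1 + μ • (ψ' x1 - ψ' xk) with hqx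
  set Tx : Euc n →L[ℝ] ℝ := (innerSL ℝ yt1).comp A with hTx
  have hTf : HasFDerivAt (fun x : Euc n => ⟪A x, yt1⟫) Tx x1 := by
    have h1 : (fun x : Euc n => ⟪A x, yt1⟫) = fun x => Tx x := by
      funext x
      simp only [hTx, ContinuousLinearMap.comp_apply, innerSL_apply_apply]
      exact real_inner_comm _ _
    rw [h1]
    exact Tx.hasFDerivAt
  set Lx : Euc n →L[ℝ] ℝ :=
    Tx + μ • (InnerProductSpace.toDual ℝ (Euc n) (ψ' x1) - innerSL ℝ (ψ' xk)) with hLx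
  have hg0x : HasFDerivAt (fun x => ⟪A x, yt1⟫ + μ * Breg ψ ψ' x xk) Lx x1 :=
    hTf.add ((breg_fderiv ψ ψ' hψg xk x1).const_mul μ)
  have hLqx : ∀ v, Lx v = ⟪qx, v⟫ := by
    intro v
    simp only [hLx, hqx, hTx, ContinuousLinearMap.add_apply, ContinuousLinearMap.coe_smul',
      Pi.smul_apply, ContinuousLinearMap.coe_sub', Pi.sub_apply,
      ContinuousLinearMap.comp_apply, innerSL_apply_apply, InnerProductSpace.toDual_apply_apply,
      smul_eq_mul, inner_add_left, real_inner_smul_left, inner_sub_left,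
      ContinuousLinearMap.adjoint_inner_left]
  have hfo_x : ∀ z ∈ X, f x1 ≤ f z + ⟪qx, z - x1⟫ := by
    refine first_order hXcv hf hx1mem hg0x hLqx ?_
    intro x hx
    have := hx1min x hx
    linarith
  obtain ⟨ξ, hξmem, hξvi⟩ := exists_subgrad hXcv hf hfc hx1mem qx hfo_x
  -- y-side gradient data
  set qy : Euc m := -(A x1) + γ • (φ' y1 - φ' yk) with hqy
  set Ty : Euc m →L[ℝ] ℝ := -(innerSL ℝ (A x1)) with hTy
  have hTfy : HasFDerivAt (fun y : Euc m => -⟪A x1, y⟫) Ty y1 := by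
    have h1 : (fun y : Euc m => -⟪A x1, y⟫) = fun y => Ty y := by
      funext y
      simp [hTy]
    rw [h1]
    exact Ty.hasFDerivAt
  set Ly : Euc m →L[ℝ] ℝ :=
    Ty + γ • (InnerProductSpace.toDual ℝ (Euc m) (φ' y1) - innerSL ℝ (φ' yk)) with hLy
  have hg0y : HasFDerivAt (fun y => -⟪A x1, y⟫ + γ * Breg φ φ' y yk) Ly y1 :=
    hTfy.add ((breg_fderiv φ φ' hφg yk y1).const_mul γ)
  have hLqy : ∀ v, Ly v = ⟪qy, v⟫ := by
    intro v
    simp only [hLy, hqy, hTy, ContinuousLinearMap.add_apply, ContinuousLinearMap.coe_smul',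
      Pi.smul_apply, ContinuousLinearMap.coe_sub', Pi.sub_apply, ContinuousLinearMap.neg_apply,
      innerSL_apply_apply, InnerProductSpace.toDual_apply_apply,
      smul_eq_mul, inner_add_left, real_inner_smul_left, inner_sub_left, inner_neg_left]
  have hfo_y : ∀ z ∈ Y, g y1 ≤ g z + ⟪qy, z - y1⟫ := by
    refine first_order hYcv hg hy1mem hg0y hLqy ?_
    intro y hy
    have := hy1max y hy
    linarith
  obtain ⟨ζ, hζmem, hζvi⟩ := exists_subgrad hYcv hg hgc hy1mem qy hfo_y
  refine ⟨ξ, hξmem, ζ, hζmem, ?_⟩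
  -- projection residual bounds
  have hprojx : projOn X (x1 - (ξ + qx)) = x1 :=
    projOn_fixed hXne hXcl hXcv hx1mem (ξ + qx) hξvi
  have hprojy : projOn Y (y1 - (ζ + qy)) = y1 :=
    projOn_fixed hYne hYcl hYcv hy1mem (ζ + qy) hζvi
  have hψd : ‖ψ' x1 - ψ' xk‖ ≤ (Lψ : ℝ) * ‖x1 - xk‖ := by
    have := hψlip.dist_le_mul x1 xk
    rwa [dist_eq_norm, dist_eq_norm] at this
  have hφd : ‖φ' y1 - φ' yk‖ ≤ (Lφ : ℝ) * ‖y1 - yk‖ := by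
    have := hφlip.dist_le_mul y1 yk
    rwa [dist_eq_norm, dist_eq_norm] at this
  have r1 : ‖x1 - projOn X (x1 - (ξ + ContinuousLinearMap.adjoint A y1))‖
      ≤ ‖ContinuousLinearMap.adjoint A (y1 - yt1)‖ + μ * ((Lψ : ℝ) * ‖x1 - xk‖) := by
    calc ‖x1 - projOn X (x1 - (ξ + ContinuousLinearMap.adjoint A y1))‖
        = ‖projOn X (x1 - (ξ + qx)) - projOn X (x1 - (ξ + ContinuousLinearMap.adjoint A y1))‖ := by
          rw [hprojx]
      _ ≤ ‖(x1 - (ξ + qx)) - (x1 - (ξ + ContinuousLinearMap.adjoint A y1))‖ :=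
          projOn_nonexp hXne hXcl hXcv _ _
      _ = ‖ContinuousLinearMap.adjoint A (y1 - yt1) - μ • (ψ' x1 - ψ' xk)‖ := by
          rw [map_sub, hqx]; congr 1; abel
      _ ≤ ‖ContinuousLinearMap.adjoint A (y1 - yt1)‖ + ‖μ • (ψ' x1 - ψ' xk)‖ :=
          norm_sub_le _ _
      _ ≤ ‖ContinuousLinearMap.adjoint A (y1 - yt1)‖ + μ * ((Lψ : ℝ) * ‖x1 - xk‖) := by
          rw [norm_smul, Real.norm_eq_abs, abs_of_pos hμ]
          have := mul_le_mul_of_nonneg_left hψd hμ.le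
          linarith
  have r2 : ‖y1 - projOn Y (y1 - (ζ - A x1))‖ ≤ γ * ((Lφ : ℝ) * ‖y1 - yk‖) := by
    calc ‖y1 - projOn Y (y1 - (ζ - A x1))‖
        = ‖projOn Y (y1 - (ζ + qy)) - projOn Y (y1 - (ζ - A x1))‖ := by rw [hprojy]
      _ ≤ ‖(y1 - (ζ + qy)) - (y1 - (ζ - A x1))‖ := projOn_nonexp hYne hYcl hYcv _ _
      _ = ‖-(γ • (φ' y1 - φ' yk))‖ := by
          rw [hqy]; congr 1; abel
      _ = γ * ‖φ' y1 - φ' yk‖ := by rw [norm_neg, norm_smul, Real.norm_eq_abs, abs_of_pos hγ]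
      _ ≤ γ * ((Lφ : ℝ) * ‖y1 - yk‖) := mul_le_mul_of_nonneg_left hφd hγ.le
  -- spectral bound
  have hA2 : ‖ContinuousLinearMap.adjoint A (y1 - yt1)‖ ^ 2
      ≤ ‖A.comp (ContinuousLinearMap.adjoint A)‖ * ‖yt1 - y1‖ ^ 2 := by
    set w := y1 - yt1 with hw
    have e1 : ‖ContinuousLinearMap.adjoint A w‖ ^ 2
        = ⟪w, (A.comp (ContinuousLinearMap.adjoint A)) w⟫ := by
      rw [← real_inner_self_eq_norm_sq, ContinuousLinearMap.comp_apply,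
        ← ContinuousLinearMap.adjoint_inner_left A]
    have e2 : ⟪w, (A.comp (ContinuousLinearMap.adjoint A)) w⟫
        ≤ ‖w‖ * ‖(A.comp (ContinuousLinearMap.adjoint A)) w‖ := real_inner_le_norm _ _
    have e3 : ‖(A.comp (ContinuousLinearMap.adjoint A)) w‖
        ≤ ‖A.comp (ContinuousLinearMap.adjoint A)‖ * ‖w‖ :=
      (A.comp (ContinuousLinearMap.adjoint A)).le_opNorm w
    have e4 : ‖w‖ = ‖yt1 - y1‖ := by rw [hw, norm_sub_rev]
    calc ‖ContinuousLinearMap.adjoint A w‖ ^ 2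
        = ⟪w, (A.comp (ContinuousLinearMap.adjoint A)) w⟫ := e1
      _ ≤ ‖w‖ * ‖(A.comp (ContinuousLinearMap.adjoint A)) w‖ := e2
      _ ≤ ‖w‖ * (‖A.comp (ContinuousLinearMap.adjoint A)‖ * ‖w‖) :=
          mul_le_mul_of_nonneg_left e3 (norm_nonneg _)
      _ = ‖A.comp (ContinuousLinearMap.adjoint A)‖ * ‖yt1 - y1‖ ^ 2 := by rw [e4]; ring
  have hyk1 : ‖y1 - yk‖ ≤ ‖yt1 - y1‖ + ‖yt1 - yk‖ := by
    calc ‖y1 - yk‖ = ‖(y1 - yt1) + (yt1 - yk)‖ := by congr 1; abel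
      _ ≤ ‖y1 - yt1‖ + ‖yt1 - yk‖ := norm_add_le _ _
      _ = ‖yt1 - y1‖ + ‖yt1 - yk‖ := by rw [norm_sub_rev]
  -- final arithmetic
  set P := ‖x1 - projOn X (x1 - (ξ + ContinuousLinearMap.adjoint A y1))‖ with hP
  set Q := ‖y1 - projOn Y (y1 - (ζ - A x1))‖ with hQ
  set a1 := ‖ContinuousLinearMap.adjoint A (y1 - yt1)‖ with ha1
  set b1 := μ * ((Lψ : ℝ) * ‖x1 - xk‖) with hb1
  set c1 := ‖yt1 - y1‖ with hc1
  set d1 := ‖yt1 - yk‖ with hd1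
  set N := ‖A.comp (ContinuousLinearMap.adjoint A)‖ with hN
  have hPn : 0 ≤ P := norm_nonneg _
  have hQn : 0 ≤ Q := norm_nonneg _
  have ha1n : 0 ≤ a1 := norm_nonneg _
  have hb1n : 0 ≤ b1 := by positivity
  have hc1n : 0 ≤ c1 := norm_nonneg _
  have hd1n : 0 ≤ d1 := norm_nonneg _
  have hLφn : 0 ≤ (Lφ : ℝ) := Lφ.2
  clear_value P Q a1 b1 c1 d1 N
  have hP2 : P ^ 2 ≤ (a1 + b1) ^ 2 := by
    have := pow_le_pow_left₀ hPn r1 2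
    exact this
  have hQ2 : Q ^ 2 ≤ (γ * ((Lφ : ℝ) * (c1 + d1))) ^ 2 := by
    refine pow_le_pow_left₀ hQn ?_ 2
    calc Q ≤ γ * ((Lφ : ℝ) * ‖y1 - yk‖) := r2
      _ ≤ γ * ((Lφ : ℝ) * (c1 + d1)) := by
          have := mul_le_mul_of_nonneg_left hyk1 hLφn
          exact mul_le_mul_of_nonneg_left this hγ.le
  have hsum1 : (a1 + b1) ^ 2 ≤ 2 * a1 ^ 2 + 2 * b1 ^ 2 := by nlinarith [sq_nonneg (a1 - b1)]
  have hsum2 : (γ * ((Lφ : ℝ) * (c1 + d1))) ^ 2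
      ≤ γ ^ 2 * (Lφ : ℝ) ^ 2 * (2 * c1 ^ 2 + 2 * d1 ^ 2) := by
    have h1 : (c1 + d1) ^ 2 ≤ 2 * c1 ^ 2 + 2 * d1 ^ 2 := by nlinarith [sq_nonneg (c1 - d1)]
    have h2 : 0 ≤ γ ^ 2 * (Lφ : ℝ) ^ 2 := by positivity
    calc (γ * ((Lφ : ℝ) * (c1 + d1))) ^ 2 = γ ^ 2 * (Lφ : ℝ) ^ 2 * (c1 + d1) ^ 2 := by ring
      _ ≤ γ ^ 2 * (Lφ : ℝ) ^ 2 * (2 * c1 ^ 2 + 2 * d1 ^ 2) :=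
          mul_le_mul_of_nonneg_left h1 h2
  have hb1sq : b1 ^ 2 = μ ^ 2 * (Lψ : ℝ) ^ 2 * ‖x1 - xk‖ ^ 2 := by rw [hb1]; ring
  have final1 : P ^ 2 ≤ 2 * N * c1 ^ 2 + 2 * (μ ^ 2 * (Lψ : ℝ) ^ 2 * ‖x1 - xk‖ ^ 2) := by
    linarith only [hP2, hsum1, hA2, hb1sq]
  have final2 : Q ^ 2 ≤ 2 * (γ ^ 2 * (Lφ : ℝ) ^ 2) * c1 ^ 2
      + 2 * (γ ^ 2 * (Lφ : ℝ) ^ 2) * d1 ^ 2 := by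
    nlinarith only [hQ2, hsum2]
  linarith only [final1, final2]
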